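/- Landen's transformation: for every real number k with 0 < k < 1, setting l := 2√k/(1 + k) one has K(k) = (1/(1 + k)) · K(l) and K(√(1 − k²)) = (2/(1 + k)) · K((1 − k)/(1 + k)), where (1 − k)/(1 + k) = √(1 − l²). -/

import Mathlib

open Real

/-- Complete elliptic integral of the first kind. -/
noncomputable def K (k : ℝ) : ℝ :=
  ∫ θ in (0:ℝ)..(π / 2), 1 / Real.sqrt (1 - k ^ 2 * Real.sin θ ^ 2)

set_option maxHeartbeats 1000000 in
lemma landen_core (k : ℝ) (h0 : 0 < k) (h1 : k < 1) :
    K (2 * Real.sqrt k / (1 + k)) = (1 + k) * K k := by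
  have hk1 : (0:ℝ) < 1 + k := by linarith
  set l : ℝ := 2 * Real.sqrt k / (1 + k) with hldef
  have hsk : Real.sqrt k ^ 2 = k := Real.sq_sqrt h0.le
  have hl2 : l ^ 2 = 4 * k / (1 + k) ^ 2 := by
    rw [hldef, div_pow, mul_pow, hsk]; ring_nf
  have hl1 : l ^ 2 < 1 := by
    rw [hl2, div_lt_one (by positivity)]; nlinarith
  -- basic positivity facts
  have hden : ∀ θ : ℝ, (0:ℝ) < 1 + k * Real.sin θ ^ 2 := fun θ => by
    nlinarith [sq_nonneg (Real.sin θ)]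
  have hsub : ∀ θ : ℝ, (0:ℝ) < 1 - k ^ 2 * Real.sin θ ^ 2 := fun θ => by
    nlinarith [Real.sin_sq_le_one θ, sq_nonneg k]
  have hsub2 : ∀ θ : ℝ, (0:ℝ) < 1 - k * Real.sin θ ^ 2 := fun θ => by
    nlinarith [Real.sin_sq_le_one θ]
  have hsubl : ∀ u : ℝ, (0:ℝ) < 1 - l ^ 2 * Real.sin u ^ 2 := fun u => by
    nlinarith [Real.sin_sq_le_one u, sq_nonneg l]
  -- the substitution map and its derivative
  set r : ℝ → ℝ := fun θ => (1 + k) * Real.sin θ / (1 + k * Real.sin θ ^ 2) with hrdef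
  set f : ℝ → ℝ := fun θ => Real.arcsin (r θ) with hfdef
  set F : ℝ → ℝ := fun θ =>
    (1 + k) * (1 - k * Real.sin θ ^ 2) /
      ((1 + k * Real.sin θ ^ 2) * Real.sqrt (1 - k ^ 2 * Real.sin θ ^ 2)) with hFdef
  set g : ℝ → ℝ := fun u => 1 / Real.sqrt (1 - l ^ 2 * Real.sin u ^ 2) with hgdef
  have hrcont : Continuous r := by
    apply Continuous.div (by fun_prop) (by fun_prop)
    exact fun θ => (hden θ).ne'
  have hfcont : Continuous f := Real.continuous_arcsin.comp hrcont
  have hFcont : Continuous F := by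
    apply Continuous.div (by fun_prop) (by fun_prop)
    intro θ
    have h1 := hden θ
    have h2 : (0:ℝ) < Real.sqrt (1 - k ^ 2 * Real.sin θ ^ 2) := Real.sqrt_pos.2 (hsub θ)
    positivity
  have hgcont : Continuous g := by
    apply Continuous.div continuous_const (by fun_prop)
    exact fun u => (Real.sqrt_pos.2 (hsubl u)).ne'
  -- endpoint values
  have hf0 : f 0 = 0 := by simp [hfdef, hrdef]
  have hfpi : f (π / 2) = π / 2 := by
    have hr : r (π / 2) = 1 := by
      simp only [hrdef, Real.sin_pi_div_two, one_pow, mul_one]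
      field_simp
    simp [hfdef, hr, Real.arcsin_one]
  -- derivative of f on the open interval
  have hderiv : ∀ x ∈ Set.Ioo (0:ℝ) (π / 2), HasDerivAt f (F x) x := by
    intro x hx
    have hpi : x < π := lt_of_lt_of_le hx.2 (by linarith [Real.pi_pos])
    have hs0 : 0 < Real.sin x := Real.sin_pos_of_pos_of_lt_pi hx.1 hpi
    have hs1 : Real.sin x < 1 := by
      have := Real.sin_lt_sin_of_lt_of_le_pi_div_two
        (x := x) (y := π / 2) (by linarith [hx.1]) le_rfl hx.2
      simpa using this
    have hc0 : 0 < Real.cos x := Real.cos_pos_of_mem_Ioo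
      ⟨by linarith [hx.1, Real.pi_pos], hx.2⟩
    have hdx := hden x
    have hsx := hsub x
    have hsqx : (0:ℝ) < Real.sqrt (1 - k ^ 2 * Real.sin x ^ 2) := Real.sqrt_pos.2 hsx
    -- r x ∈ (0, 1)
    have hr1 : r x < 1 := by
      simp only [hrdef]
      rw [div_lt_one hdx]
      nlinarith
    have hr0 : 0 < r x := by
      simp only [hrdef]
      positivity
    -- derivative of r
    have hnum : HasDerivAt (fun θ => (1 + k) * Real.sin θ) ((1 + k) * Real.cos x) x :=
      (Real.hasDerivAt_sin x).const_mul (1 + k)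
    have hden' : HasDerivAt (fun θ => 1 + k * Real.sin θ ^ 2)
        (k * (2 * Real.sin x * Real.cos x)) x := by
      have h := (((Real.hasDerivAt_sin x).pow 2).const_mul k).const_add 1
      exact h.congr_deriv (by push_cast; ring)
    have hdr : HasDerivAt r
        (((1 + k) * Real.cos x * (1 + k * Real.sin x ^ 2) -
          (1 + k) * Real.sin x * (k * (2 * Real.sin x * Real.cos x))) /
          (1 + k * Real.sin x ^ 2) ^ 2) x := by
      exact hnum.div hden' hdx.ne'
    have harc := Real.hasDerivAt_arcsin (ne_of_gt (by linarith : (-1:ℝ) < r x)) hr1.ne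
    have hcomp := harc.comp x hdr
    -- identify the sqrt
    have hsqrt : Real.sqrt (1 - r x ^ 2) =
        Real.cos x * Real.sqrt (1 - k ^ 2 * Real.sin x ^ 2) / (1 + k * Real.sin x ^ 2) := by
      have hc2 : Real.cos x ^ 2 = 1 - Real.sin x ^ 2 := Real.cos_sq' x
      have hval : 1 - r x ^ 2 =
          (Real.cos x * Real.sqrt (1 - k ^ 2 * Real.sin x ^ 2) / (1 + k * Real.sin x ^ 2)) ^ 2 := by
        simp only [hrdef]
        rw [div_pow, div_pow, mul_pow, mul_pow, Real.sq_sqrt hsx.le]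
        field_simp
        nlinarith [hc2]
      rw [hval, Real.sqrt_sq (div_nonneg (mul_nonneg hc0.le hsqx.le) hdx.le)]
    have : HasDerivAt f ((1 / Real.sqrt (1 - r x ^ 2)) *
        (((1 + k) * Real.cos x * (1 + k * Real.sin x ^ 2) -
          (1 + k) * Real.sin x * (k * (2 * Real.sin x * Real.cos x))) /
          (1 + k * Real.sin x ^ 2) ^ 2)) x := hcomp
    convert this using 1
    rw [hsqrt]
    simp only [hFdef]
    field_simp
    ring
  -- apply the substitution theorem
  have hIoo : Set.Ioo (min (0:ℝ) (π / 2)) (max (0:ℝ) (π / 2)) = Set.Ioo 0 (π / 2) := by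
    rw [min_eq_left (by positivity), max_eq_right (by positivity)]
  have huIcc : Set.uIcc (0:ℝ) (π / 2) = Set.Icc 0 (π / 2) := Set.uIcc_of_le (by positivity)
  have sub := intervalIntegral.integral_comp_mul_deriv'' (a := (0:ℝ)) (b := π / 2)
      (f := f) (f' := F) (g := g)
      hfcont.continuousOn
      (by rw [hIoo]; exact fun x hx => (hderiv x hx).hasDerivWithinAt)
      hFcont.continuousOn
      hgcont.continuousOn
  rw [hf0, hfpi] at sub
  -- pointwise identity for the transformed integrand
  have hcongr : Set.EqOn (fun θ => (g ∘ f) θ * F θ)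
      (fun θ => (1 + k) * (1 / Real.sqrt (1 - k ^ 2 * Real.sin θ ^ 2)))
      (Set.uIcc (0:ℝ) (π / 2)) := by
    intro θ hθ
    rw [huIcc] at hθ
    have hs0 : 0 ≤ Real.sin θ :=
      Real.sin_nonneg_of_nonneg_of_le_pi hθ.1 (by linarith [hθ.2, Real.pi_pos])
    have hs1 : Real.sin θ ≤ 1 := Real.sin_le_one θ
    have hdx := hden θ
    have hsx := hsub θ
    have hs2 := hsub2 θ
    have hsqx : (0:ℝ) < Real.sqrt (1 - k ^ 2 * Real.sin θ ^ 2) := Real.sqrt_pos.2 hsx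
    have hr1 : r θ ≤ 1 := by
      simp only [hrdef]
      rw [div_le_one hdx]
      nlinarith
    have hrm1 : (-1:ℝ) ≤ r θ := by
      have : (0:ℝ) ≤ r θ := by simp only [hrdef]; positivity
      linarith
    have hsin : Real.sin (f θ) = r θ := by
      simp only [hfdef]
      exact Real.sin_arcsin hrm1 hr1
    have hsq : Real.sqrt (1 - l ^ 2 * Real.sin (f θ) ^ 2) =
        (1 - k * Real.sin θ ^ 2) / (1 + k * Real.sin θ ^ 2) := by
      rw [hsin]
      have hval : 1 - l ^ 2 * r θ ^ 2 =
          ((1 - k * Real.sin θ ^ 2) / (1 + k * Real.sin θ ^ 2)) ^ 2 := by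
        have hne1 : (1 + k) ≠ 0 := hk1.ne'
        have hne2 : (1 + k * Real.sin θ ^ 2) ≠ 0 := hdx.ne'
        simp only [hrdef]
        rw [hl2]
        field_simp
        ring
      rw [hval, Real.sqrt_sq (div_nonneg hs2.le hdx.le)]
    have hne1 : (1 + k * Real.sin θ ^ 2) ≠ 0 := hdx.ne'
    have hne2 : (1 - k * Real.sin θ ^ 2) ≠ 0 := hs2.ne'
    have hne3 : Real.sqrt (1 - k ^ 2 * Real.sin θ ^ 2) ≠ 0 := hsqx.ne'
    simp only [Function.comp_apply, hgdef, hFdef]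
    rw [hsq]
    field_simp
  rw [intervalIntegral.integral_congr hcongr, intervalIntegral.integral_const_mul] at sub
  calc K l = ∫ u in (0:ℝ)..(π / 2), g u := by simp only [K, hgdef]
    _ = (1 + k) * K k := by rw [← sub, K]

theorem landen_transformation (k : ℝ) (h0 : 0 < k) (h1 : k < 1)
    (l : ℝ) (hl : l = 2 * Real.sqrt k / (1 + k)) :
    K k = 1 / (1 + k) * K l ∧
    K (Real.sqrt (1 - k ^ 2)) = 2 / (1 + k) * K ((1 - k) / (1 + k)) ∧
    (1 - k) / (1 + k) = Real.sqrt (1 - l ^ 2) := by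
  have hk1 : (0:ℝ) < 1 + k := by linarith
  refine ⟨?_, ?_, ?_⟩
  · rw [hl, landen_core k h0 h1]
    field_simp
  · set k' : ℝ := (1 - k) / (1 + k) with hk'
    have h0' : 0 < k' := div_pos (by linarith) hk1
    have h1' : k' < 1 := by rw [hk', div_lt_one hk1]; linarith
    have h1k' : 1 + k' = 2 / (1 + k) := by rw [hk']; field_simp; ring
    have hnn : 0 ≤ 2 * Real.sqrt k' / (1 + k') := by positivity
    have hsq : (2 * Real.sqrt k' / (1 + k')) ^ 2 = 1 - k ^ 2 := by
      rw [div_pow, mul_pow, Real.sq_sqrt h0'.le, hk']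
      field_simp
      ring
    have hll : Real.sqrt (1 - k ^ 2) = 2 * Real.sqrt k' / (1 + k') := by
      rw [← hsq, Real.sqrt_sq hnn]
    rw [hll, landen_core k' h0' h1', h1k']
  · have hval : 1 - l ^ 2 = ((1 - k) / (1 + k)) ^ 2 := by
      rw [hl, div_pow, mul_pow, Real.sq_sqrt h0.le]
      field_simp
      ring
    rw [hval, Real.sqrt_sq (div_nonneg (by linarith) (by linarith))]
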